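/- Let K = K_R(R) be a proper cone, let r̃ ∈ int(K) and h̃ ∈ int(K*), and suppose à and w > 0 satisfy: W := à − w·r̃h̃ᵀ maps the columns of R⁽ᵏ⁾ into K_R(R⁽ᵏ⁺¹⁾) where R⁽ᵏ⁺¹⁾ = [R⁽ᵏ⁾, W R⁽ᵏ⁾], every column of R⁽ᵏ⁾ lies in K, h̃ᵀ R⁽ᵏ⁾ > 0 entrywise, and r̃ = R⁽ᵏ⁺¹⁾ p̃ for some entrywise strictly positive vector p̃. Then à R⁽ᵏ⁾ = R⁽ᵏ⁺¹⁾ P for some entrywise strictly positive matrix P. -/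

import Mathlib

open Matrix

/-- The conical hull of the columns of a matrix (R-representation),
over an arbitrary finite column index type. -/
def coneOf {n : ℕ} {κ : Type*} [Fintype κ] (R : Matrix (Fin n) κ ℝ) :
    Set (Fin n → ℝ) :=
  {x | ∃ p : κ → ℝ, (∀ j, 0 ≤ p j) ∧ x = R *ᵥ p}

/-- The dual cone. -/
def dualCone {n : ℕ} (K : Set (Fin n → ℝ)) : Set (Fin n → ℝ) :=
  {h | ∀ r ∈ K, 0 ≤ h ⬝ᵥ r}

/-- A proper cone: closed convex cone with nonempty interior, pointed. -/
def IsProperCone {n : ℕ} (K : Set (Fin n → ℝ)) : Prop :=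
  ((∀ x ∈ K, ∀ y ∈ K, x + y ∈ K) ∧ (∀ x ∈ K, ∀ c : ℝ, 0 ≤ c → c • x ∈ K)) ∧
  IsClosed K ∧ (interior K).Nonempty ∧ ∀ x ∈ K, -x ∈ K → x = 0

/-- The widening argument: with W = Ã - w r̃h̃ᵀ and R⁽ᵏ⁺¹⁾ = [R⁽ᵏ⁾, W R⁽ᵏ⁾], if
W R⁽ᵏ⁾ = R⁽ᵏ⁺¹⁾P̄ with P̄ ≥ 0, the columns of R⁽ᵏ⁾ lie in K, h̃ᵀR⁽ᵏ⁾ > 0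
entrywise, and r̃ = R⁽ᵏ⁺¹⁾p̃ with p̃ > 0, then Ã R⁽ᵏ⁾ = R⁽ᵏ⁺¹⁾P with P
entrywise strictly positive. -/
theorem stmt13 {n m q : ℕ} (R : Matrix (Fin n) (Fin q) ℝ)
    (hproper : IsProperCone (coneOf R))
    (rt ht : Fin n → ℝ)
    (hrt : rt ∈ interior (coneOf R)) (hht : ht ∈ interior (dualCone (coneOf R)))
    (At : Matrix (Fin n) (Fin n) ℝ) (w : ℝ) (hw : 0 < w)
    (Rk : Matrix (Fin n) (Fin m) ℝ)
    (W : Matrix (Fin n) (Fin n) ℝ) (hW : W = At - w • Matrix.vecMulVec rt ht)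
    (Rk1 : Matrix (Fin n) (Fin m ⊕ Fin m) ℝ)
    (hRk1 : Rk1 = Matrix.fromCols Rk (W * Rk))
    (hPbar : ∃ Pbar : Matrix (Fin m ⊕ Fin m) (Fin m) ℝ,
      (∀ i j, 0 ≤ Pbar i j) ∧ W * Rk = Rk1 * Pbar)
    (hcols : ∀ j : Fin m, (fun i => Rk i j) ∈ coneOf R)
    (hhtRk : ∀ j : Fin m, 0 < ht ⬝ᵥ (fun i => Rk i j))
    (pt : Fin m ⊕ Fin m → ℝ) (hpt : ∀ i, 0 < pt i) (hrteq : rt = Rk1 *ᵥ pt) :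
    ∃ P : Matrix (Fin m ⊕ Fin m) (Fin m) ℝ,
      (∀ i j, 0 < P i j) ∧ At * Rk = Rk1 * P := by
  obtain ⟨Pbar, hPnn, hPeq⟩ := hPbar
  refine ⟨fun s j => Pbar s j + w * pt s * (ht ⬝ᵥ fun k => Rk k j), ?_, ?_⟩
  · intro i j
    exact add_pos_of_nonneg_of_pos (hPnn i j)
      (mul_pos (mul_pos hw (hpt i)) (hhtRk j))
  · have hAt : At = W + w • Matrix.vecMulVec rt ht := by
      rw [hW, sub_add_cancel]
    ext i j
    have hrti : rt i = ∑ s, Rk1 i s * pt s := by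
      rw [hrteq]; rfl
    have hWRk : ∑ k, W i k * Rk k j = ∑ s, Rk1 i s * Pbar s j := by
      rw [← Matrix.mul_apply, ← Matrix.mul_apply, hPeq]
    obtain ⟨c, hc⟩ : ∃ c : ℝ, ∑ k, ht k * Rk k j = c := ⟨_, rfl⟩
    have lhs : (At * Rk) i j = (∑ k, W i k * Rk k j) + w * rt i * c := by
      simp only [hAt, Matrix.mul_apply, Matrix.add_apply, Matrix.smul_apply,
        Matrix.vecMulVec_apply, smul_eq_mul, add_mul, Finset.sum_add_distrib, hc]
      congr 1
      rw [← hc, Finset.mul_sum]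
      exact Finset.sum_congr rfl fun k _ => by ring
    rw [lhs, hWRk]
    change _ = ∑ s, Rk1 i s * (Pbar s j + w * pt s * (ht ⬝ᵥ fun k => Rk k j))
    simp only [Matrix.mul_apply, dotProduct, mul_add,
      Finset.sum_add_distrib, hc]
    congr 1
    rw [hrti, Finset.mul_sum, Finset.sum_mul]
    exact Finset.sum_congr rfl fun s _ => by ring
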